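/- Let (r*, α*) be an optimal solution to the triangle convex program CP_tr(G): minimize Σ_u r_u² subject to r_u = Σ_{t∈T: u∈t} α_{u,t}, Σ_{u∈t} α_{u,t} = 1 and α_{u,t} ≥ 0 for every triangle t. Then for every triangle t = (a,b,c) with r*_a > r*_c and r*_b > r*_c, we have α*_{c,t} = 1. -/
import Mathlib


open Finset

variable {V : Type*} [Fintype V] [DecidableEq V]

/-- The set of triangles (3-cliques) of `G`, as 3-element vertex sets. -/
def triFinset (G : SimpleGraph V) [DecidableRel G.Adj] : Finset (Finset V) :=
  Finset.univ.filter fun t => t.card = 3 ∧ ∀ u ∈ t, ∀ v ∈ t, u ≠ v → G.Adj u v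

/-- Number of triangles of `G` with all vertices in `S`. -/
def triCount (G : SimpleGraph V) [DecidableRel G.Adj] (S : Finset V) : ℕ :=
  ((triFinset G).filter fun t => t ⊆ S).card

/-- Triangle density |T(G[S])|/|S|. -/
noncomputable def trDensity (G : SimpleGraph V) [DecidableRel G.Adj] (S : Finset V) : ℝ :=
  (triCount G S : ℝ) / (S.card : ℝ)

/-- `G[S]` is ρ-tr-compact: connected, and removing any nonempty `U ⊆ S`
removes at least `ρ * |U|` triangles. -/
def IsTrCompactSub (G : SimpleGraph V) [DecidableRel G.Adj] (ρ : ℝ) (S : Finset V) : Prop :=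
  0 ≤ ρ ∧ (G.induce (S : Set V)).Connected ∧
  ∀ U ⊆ S, U.Nonempty →
    ρ * (U.card : ℝ) ≤ (triCount G S : ℝ) - (triCount G (S \ U) : ℝ)

/-- `G[S]` is a locally triangle-densest subgraph. -/
def IsLTDS (G : SimpleGraph V) [DecidableRel G.Adj] (S : Finset V) : Prop :=
  IsTrCompactSub G (trDensity G S) S ∧
  ∀ S' : Finset V, S ⊂ S' → ¬ IsTrCompactSub G (trDensity G S) S'

/-- The triangle-compact number of `u`. -/
noncomputable def trCompactNum (G : SimpleGraph V) [DecidableRel G.Adj] (u : V) : ℝ :=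
  sSup {ρ : ℝ | ∃ S : Finset V, u ∈ S ∧ IsTrCompactSub G ρ S}

/-- Feasibility for the triangle convex program CP_tr(G). -/
def CPtrFeasible (G : SimpleGraph V) [DecidableRel G.Adj]
    (r : V → ℝ) (α : V → Finset V → ℝ) : Prop :=
  (∀ u, r u = ∑ t ∈ (triFinset G).filter (fun t => u ∈ t), α u t) ∧
  (∀ t ∈ triFinset G, ∑ u ∈ t, α u t = 1) ∧
  (∀ t ∈ triFinset G, ∀ u ∈ t, 0 ≤ α u t)

/-- Optimality for CP_tr(G). -/
def CPtrOptimal (G : SimpleGraph V) [DecidableRel G.Adj]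
    (r : V → ℝ) (α : V → Finset V → ℝ) : Prop :=
  CPtrFeasible G r α ∧
  ∀ r' α', CPtrFeasible G r' α' → ∑ u, (r u) ^ 2 ≤ ∑ u, (r' u) ^ 2

/-- Exchange lemma: in an optimal solution, a vertex with strictly larger r-value
than some other vertex of a triangle receives no weight from that triangle. -/
lemma cptr_exchange (G : SimpleGraph V) [DecidableRel G.Adj]
    (r : V → ℝ) (α : V → Finset V → ℝ) (hopt : CPtrOptimal G r α)
    (t : Finset V) (ht : t ∈ triFinset G) (x c : V) (hx : x ∈ t) (hc : c ∈ t)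
    (hxc : x ≠ c) (hrord : r c < r x) : α x t = 0 := by
  obtain ⟨⟨hfeasr, hfeas1, hfeas0⟩, hmin⟩ := hopt
  by_contra hne
  have hpos : 0 < α x t := lt_of_le_of_ne (hfeas0 t ht x hx) (Ne.symm hne)
  set ε := min (α x t) ((r x - r c) / 2) with hεdef
  have hε : 0 < ε := lt_min hpos (by linarith)
  have hε1 : ε ≤ α x t := min_le_left _ _
  have hε2 : ε ≤ (r x - r c) / 2 := min_le_right _ _
  set α' : V → Finset V → ℝ := fun u s =>
    if s = t ∧ u = x then α u s - ε else if s = t ∧ u = c then α u s + ε else α u s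
    with hα'
  set r' : V → ℝ := fun u => ∑ s ∈ (triFinset G).filter (fun s => u ∈ s), α' u s
    with hr'def
  have hαx : ∀ s, α' x s = α x s - (if s = t then ε else 0) := by
    intro s
    simp only [hα']
    by_cases h : s = t <;> simp [h, hxc]
  have hαc : ∀ s, α' c s = α c s + (if s = t then ε else 0) := by
    intro s
    simp only [hα']
    by_cases h : s = t <;> simp [h, Ne.symm hxc]
  have hαo : ∀ u, u ≠ x → u ≠ c → ∀ s, α' u s = α u s := by
    intro u hux huc s
    simp [hα', hux, huc]
  have hmt : t ∈ (triFinset G).filter (fun s => x ∈ s) := by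
    simp [Finset.mem_filter, ht, hx]
  have hmtc : t ∈ (triFinset G).filter (fun s => c ∈ s) := by
    simp [Finset.mem_filter, ht, hc]
  have hrx : r' x = r x - ε := by
    rw [hr'def]
    simp only [hαx]
    rw [Finset.sum_sub_distrib, Finset.sum_ite_eq' _ t (fun _ => ε), if_pos hmt,
      ← hfeasr x]
  have hrc : r' c = r c + ε := by
    rw [hr'def]
    simp only [hαc]
    rw [Finset.sum_add_distrib, Finset.sum_ite_eq' _ t (fun _ => ε), if_pos hmtc,
      ← hfeasr c]
  have hro : ∀ u, u ≠ x → u ≠ c → r' u = r u := by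
    intro u hux huc
    rw [hr'def, hfeasr u]
    exact Finset.sum_congr rfl fun s _ => hαo u hux huc s
  have hsubxc : ({x, c} : Finset V) ⊆ t := by
    intro u hu
    rcases Finset.mem_insert.mp hu with h | h
    · exact h ▸ hx
    · exact (Finset.mem_singleton.mp h) ▸ hc
  have hfeas' : CPtrFeasible G r' α' := by
    refine ⟨fun u => rfl, ?_, ?_⟩
    · intro s hs
      by_cases hst : s = t
      · subst hst
        have hzero : ∑ u ∈ s, (α' u s - α u s) = 0 := by
          rw [← Finset.sum_subset hsubxc (by
            intro u _ hu
            simp only [Finset.mem_insert, Finset.mem_singleton, not_or] at hu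
            rw [hαo u hu.1 hu.2]; ring)]
          rw [Finset.sum_pair hxc, hαx, hαc]
          simp
        rw [Finset.sum_sub_distrib, hfeas1 s hs] at hzero
        linarith
      · rw [← hfeas1 s hs]
        exact Finset.sum_congr rfl fun u _ => by simp [hα', hst]
    · intro s hs u hu
      simp only [hα']
      split_ifs with h1 h2
      · obtain ⟨h1s, h1u⟩ := h1
        subst h1s; subst h1u
        linarith [hε1]
      · linarith [hfeas0 s hs u hu, hε.le]
      · exact hfeas0 s hs u hu
  have hdiff : ∑ u, (r' u ^ 2 - r u ^ 2) = ∑ u ∈ ({x, c} : Finset V), (r' u ^ 2 - r u ^ 2) := by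
    refine (Finset.sum_subset (Finset.subset_univ _) ?_).symm
    intro u _ hu
    simp only [Finset.mem_insert, Finset.mem_singleton, not_or] at hu
    rw [hro u hu.1 hu.2]; ring
  have hlt : ∑ u, r' u ^ 2 < ∑ u, r u ^ 2 := by
    have h1 : ∑ u, (r' u ^ 2 - r u ^ 2) < 0 := by
      rw [hdiff, Finset.sum_pair hxc, hrx, hrc]
      nlinarith [hε, hε2]
    rw [Finset.sum_sub_distrib] at h1
    linarith
  have := hmin r' α' hfeas'
  linarith

/-- in an optimal CP_tr solution, a triangle gives all its weight
to its vertex of strictly smallest r-value. -/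
theorem cptr_optimal_alpha_one (G : SimpleGraph V) [DecidableRel G.Adj]
    (r : V → ℝ) (α : V → Finset V → ℝ) (hopt : CPtrOptimal G r α) :
    ∀ a b c : V, ({a, b, c} : Finset V) ∈ triFinset G →
      r a > r c → r b > r c → α c {a, b, c} = 1 := by
  intro a b c htri hra hrb
  have hac : a ≠ c := fun h => by rw [h] at hra; exact lt_irrefl _ hra
  have hbc : b ≠ c := fun h => by rw [h] at hrb; exact lt_irrefl _ hrb
  have hcard : ({a, b, c} : Finset V).card = 3 := by
    have := (Finset.mem_filter.mp htri).2.1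
    exact this
  have hab : a ≠ b := by
    intro h
    subst h
    have : ({a, a, c} : Finset V) = {a, c} := by
      ext u; simp [or_assoc]
    rw [this] at hcard
    have h2 : ({a, c} : Finset V).card ≤ 2 := by
      calc ({a, c} : Finset V).card ≤ ({c} : Finset V).card + 1 := Finset.card_insert_le _ _
        _ = 2 := by simp
    omega
  have hma : a ∈ ({a, b, c} : Finset V) := by simp
  have hmb : b ∈ ({a, b, c} : Finset V) := by simp
  have hmc : c ∈ ({a, b, c} : Finset V) := by simp
  have hαa : α a {a, b, c} = 0 :=
    cptr_exchange G r α hopt _ htri a c hma hmc hac hra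
  have hαb : α b {a, b, c} = 0 :=
    cptr_exchange G r α hopt _ htri b c hmb hmc hbc hrb
  have hsum : ∑ u ∈ ({a, b, c} : Finset V), α u {a, b, c} = 1 :=
    hopt.1.2.1 _ htri
  have hna : a ∉ ({b, c} : Finset V) := by simp [hab, hac]
  have hnb : b ∉ ({c} : Finset V) := by simp [hbc]
  rw [Finset.sum_insert hna, Finset.sum_insert hnb, Finset.sum_singleton,
    hαa, hαb] at hsum
  linarith
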